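/- Let D_1, …, D_k be path degree sequences on a common set of n vertices without common leaves. Then they have edge-disjoint realizations: there exist pairwise edge-disjoint simple graphs G_1, …, G_k on the vertex set such that each G_i is a path realizing D_i. -/

import Mathlib

open SimpleGraph

lemma reach_const {V : Type*} {G : SimpleGraph V} (f : V → Prop)
    (hf : ∀ a b, G.Adj a b → (f a ↔ f b)) {u v : V} (h : G.Reachable u v) : f u ↔ f v := by
  obtain ⟨p⟩ := h
  induction p with
  | nil => rfl
  | cons h' p ih => exact (hf _ _ h').trans ih

lemma pg_acyclic (n : ℕ) : (pathGraph n).IsAcyclic := by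
  classical
  have key : ∀ (a b : Fin n), a.val + 1 = b.val →
      ¬ (pathGraph n \ fromEdgeSet {s(a, b)}).Reachable a b := by
    intro a b hab hr
    have := reach_const (G := pathGraph n \ fromEdgeSet {s(a, b)})
      (fun x => x.val ≤ a.val) ?_ hr
    · have h : b.val ≤ a.val := this.mp (le_refl a.val); omega
    · intro x y hxy
      rw [SimpleGraph.sdiff_adj, fromEdgeSet_adj] at hxy
      obtain ⟨hadj, hne⟩ := hxy
      rw [pathGraph_adj] at hadj
      have hne' : ¬ s(x, y) = s(a, b) := fun h => hne ⟨h, by intro h'; subst h'; omega⟩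
      rw [Sym2.eq_iff] at hne'
      push_neg at hne'
      have h1 : x = a → y ≠ b := fun h => (hne'.1 h)
      have h2 : x = b → y ≠ a := fun h => (hne'.2 h)
      simp only [← Fin.val_ne_iff, Fin.ext_iff] at h1 h2 ⊢
      omega
  rw [isAcyclic_iff_forall_adj_isBridge]
  intro v w hvw
  rw [isBridge_iff]
  show ¬ (pathGraph n \ fromEdgeSet {s(v, w)}).Reachable v w
  rw [pathGraph_adj] at hvw
  rcases hvw with h | h
  · exact key v w h
  · intro hr
    exact key w v h (by rwa [Sym2.eq_swap, reachable_comm] at hr)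

lemma pg_tree {n : ℕ} (hn : 2 ≤ n) : (pathGraph n).IsTree := by
  obtain ⟨m, rfl⟩ : ∃ m, n = m + 1 := ⟨n - 1, by omega⟩
  exact ⟨pathGraph_connected m, pg_acyclic _⟩

lemma tree_map {V W : Type*} {G : SimpleGraph V} {H : SimpleGraph W} (e : G ≃g H)
    (hG : G.IsTree) : H.IsTree := by
  refine ⟨e.connected_iff.mp hG.isConnected, ?_⟩
  intro v c hc
  exact hG.IsAcyclic (c.map e.symm.toHom) (hc.map e.symm.toEquiv.injective)

lemma pg_nbr {n : ℕ} (hn : 2 ≤ n) (v : Fin n) :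
    ((pathGraph n).neighborSet v).ncard = if v.val = 0 ∨ v.val = n - 1 then 1 else 2 := by
  by_cases h0 : v.val = 0
  · have : (pathGraph n).neighborSet v = {⟨1, by omega⟩} := by
      ext u
      simp only [mem_neighborSet, pathGraph_adj, Set.mem_singleton_iff, Fin.ext_iff]
      omega
    rw [this, Set.ncard_singleton, if_pos (Or.inl h0)]
  · by_cases h1 : v.val = n - 1
    · have : (pathGraph n).neighborSet v = {⟨n - 2, by omega⟩} := by
        ext u
        simp only [mem_neighborSet, pathGraph_adj, Set.mem_singleton_iff, Fin.ext_iff]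
        omega
      rw [this, Set.ncard_singleton, if_pos (Or.inr h1)]
    · have : (pathGraph n).neighborSet v = {⟨v.val - 1, by omega⟩, ⟨v.val + 1, by omega⟩} := by
        ext u
        simp only [mem_neighborSet, pathGraph_adj, Set.mem_insert_iff, Set.mem_singleton_iff,
          Fin.ext_iff]
        omega
      rw [this, Set.ncard_pair (by simp only [ne_eq, Fin.ext_iff]; omega), if_neg (by tauto)]

/-- The zigzag offset sequence as an element of `ZMod n`. -/
def zigfun (n j : ℕ) : ZMod n :=
  if j % 2 = 1 then (((j + 1) / 2 : ℕ) : ZMod n) else -(((j / 2 : ℕ) : ZMod n))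

lemma zig_zero (n : ℕ) : zigfun n 0 = 0 := by simp [zigfun]

lemma zig_sum (n j : ℕ) : zigfun n j + zigfun n (j + 1) =
    if j % 2 = 1 then 0 else 1 := by
  rcases Nat.even_or_odd j with h | h
  · have h2 : j % 2 = 0 := Nat.even_iff.mp h
    have h3 : (j + 1) % 2 = 1 := by omega
    have h4 : (j + 1 + 1) / 2 = j / 2 + 1 := by omega
    rw [zigfun, zigfun, if_neg (by omega), if_pos h3, h4, if_neg (by omega)]
    push_cast
    ring
  · have h2 : j % 2 = 1 := Nat.odd_iff.mp h
    have h3 : (j + 1) % 2 = 0 := by omega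
    have h4 : (j + 1) / 2 = (j + 1) / 2 := rfl
    rw [zigfun, zigfun, if_pos h2, if_neg (by omega), if_pos h2]
    ring

lemma zig_last {n : ℕ} (hn : 2 ≤ n) : zigfun n (n - 1) = (((n + 1) / 2 : ℕ) : ZMod n) := by
  haveI : NeZero n := ⟨by omega⟩
  rcases Nat.even_or_odd n with h | h
  · have h2 : (n - 1) % 2 = 1 := by have := Nat.even_iff.mp h; omega
    rw [zigfun, if_pos h2]
    congr 1
    omega
  · have h1 : n % 2 = 1 := Nat.odd_iff.mp h
    have h2 : (n - 1) % 2 = 0 := by omega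
    rw [zigfun, if_neg (by omega)]
    have hsum : ((n - 1) / 2 : ℕ) + ((n + 1) / 2 : ℕ) = n := by omega
    have : (((n - 1) / 2 : ℕ) : ZMod n) + (((n + 1) / 2 : ℕ) : ZMod n) = 0 := by
      rw [← Nat.cast_add, hsum, ZMod.natCast_self]
    exact neg_eq_of_add_eq_zero_right this

lemma zig_inj {n : ℕ} (hn : 2 ≤ n) {j j' : ℕ} (hj : j < n) (hj' : j' < n)
    (h : zigfun n j = zigfun n j') : j = j' := by
  haveI : NeZero n := ⟨by omega⟩
  have cast_inj : ∀ a b : ℕ, a < n → b < n → (a : ZMod n) = (b : ZMod n) → a = b := by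
    intro a b ha hb hab
    have := congrArg ZMod.val hab
    rwa [ZMod.val_natCast, ZMod.val_natCast, Nat.mod_eq_of_lt ha, Nat.mod_eq_of_lt hb] at this
  have sum_zero : ∀ a b : ℕ, a + b < n → (a : ZMod n) = -(b : ZMod n) → a + b = 0 := by
    intro a b hab h
    have : ((a + b : ℕ) : ZMod n) = 0 := by push_cast; rw [h]; ring
    have := (ZMod.natCast_eq_zero_iff _ _).mp this
    exact Nat.eq_zero_of_dvd_of_lt this hab
  rcases Nat.even_or_odd j with h1 | h1 <;> rcases Nat.even_or_odd j' with h2 | h2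
  · -- both even
    have e1 : j % 2 = 0 := Nat.even_iff.mp h1
    have e2 : j' % 2 = 0 := Nat.even_iff.mp h2
    rw [zigfun, zigfun, if_neg (by omega), if_neg (by omega), neg_inj] at h
    have := cast_inj _ _ (by omega) (by omega) h
    omega
  · have e1 : j % 2 = 0 := Nat.even_iff.mp h1
    have e2 : j' % 2 = 1 := Nat.odd_iff.mp h2
    rw [zigfun, zigfun, if_neg (by omega), if_pos e2] at h
    have := sum_zero ((j' + 1) / 2) (j / 2) (by omega) h.symm
    omega
  · have e1 : j % 2 = 1 := Nat.odd_iff.mp h1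
    have e2 : j' % 2 = 0 := Nat.even_iff.mp h2
    rw [zigfun, zigfun, if_pos e1, if_neg (by omega)] at h
    have := sum_zero ((j + 1) / 2) (j' / 2) (by omega) h
    omega
  · have e1 : j % 2 = 1 := Nat.odd_iff.mp h1
    have e2 : j' % 2 = 1 := Nat.odd_iff.mp h2
    rw [zigfun, zigfun, if_pos e1, if_pos e2] at h
    have := cast_inj _ _ (by omega) (by omega) h
    omega

lemma zmod_cast_inj {n a b : ℕ} [NeZero n] (ha : a < n) (hb : b < n)
    (h : (a : ZMod n) = b) : a = b := by
  have := congrArg ZMod.val h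
  rwa [ZMod.val_natCast, ZMod.val_natCast, Nat.mod_eq_of_lt ha, Nat.mod_eq_of_lt hb] at this

lemma main_aux {n k : ℕ} (hn : 2 ≤ n) (h2k : k + k ≤ n) (A B : Fin k → Fin n)
    (hAB : Function.Injective (Sum.elim A B : Fin k ⊕ Fin k → Fin n)) :
    ∃ G : Fin k → SimpleGraph (Fin n),
      (∀ i, (G i).IsTree) ∧
      (∀ i j, i ≠ j → Disjoint (G i).edgeSet (G j).edgeSet) ∧
      (∀ i v, ((G i).neighborSet v).ncard = if v = A i ∨ v = B i then 1 else 2) := by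
  classical
  haveI : NeZero n := ⟨by omega⟩
  set c : ℕ := (n + 1) / 2 with hc
  have hck : k ≤ c := by omega
  have hckn : c + k ≤ n := by omega
  -- the zigzag equivalence
  have hgbij : Function.Bijective (fun j : Fin n => zigfun n j.val) := by
    rw [Fintype.bijective_iff_injective_and_card]
    refine ⟨fun j j' h => Fin.ext (zig_inj hn j.2 j'.2 h), by simp [ZMod.card]⟩
  let zigE : Fin n ≃ ZMod n := Equiv.ofBijective _ hgbij
  have zigE_apply : ∀ j : Fin n, zigE j = zigfun n j.val := fun _ => rfl
  -- ZMod n to Fin n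
  have tfbij : Function.Bijective (fun z : ZMod n => (⟨z.val, ZMod.val_lt z⟩ : Fin n)) := by
    rw [Fintype.bijective_iff_injective_and_card]
    refine ⟨fun a b h => ZMod.val_injective n (by simpa [Fin.ext_iff] using h), by simp [ZMod.card]⟩
  let toFin : ZMod n ≃ Fin n := Equiv.ofBijective _ tfbij
  have toFin_val : ∀ z : ZMod n, (toFin z).val = z.val := fun _ => rfl
  -- source and target injections for the relabeling permutation
  let src : Fin k ⊕ Fin k → Fin n :=
    Sum.elim (fun i => ⟨i.val, by omega⟩) (fun i => ⟨i.val + c, by omega⟩)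
  have hsrc : Function.Injective src := by
    rintro (i | i) (j | j) h <;>
      simp only [src, Sum.elim_inl, Sum.elim_inr, Fin.ext_iff] at h <;>
      [exact congrArg _ (Fin.ext h); exact absurd h (by omega);
       exact absurd h (by omega); exact congrArg _ (Fin.ext (by omega))]
  -- the relabeling permutation
  let e1 : (Set.range src) ≃ (Set.range (Sum.elim A B)) :=
    (Equiv.ofInjective src hsrc).symm.trans (Equiv.ofInjective _ hAB)
  let e2 : ↥(Set.range src)ᶜ ≃ ↥(Set.range (Sum.elim A B))ᶜ :=
    Fintype.equivOfCardEq (by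
      rw [Fintype.card_compl_set, Fintype.card_compl_set,
        Set.card_range_of_injective hsrc, Set.card_range_of_injective hAB])
  let τ : Fin n ≃ Fin n :=
    (Equiv.Set.sumCompl (Set.range src)).symm.trans
      ((e1.sumCongr e2).trans (Equiv.Set.sumCompl (Set.range (Sum.elim A B))))
  have hτ : ∀ x, τ (src x) = Sum.elim A B x := by
    intro x
    have hm : src x ∈ Set.range src := ⟨x, rfl⟩
    simp only [τ, Equiv.trans_apply]
    rw [Equiv.Set.sumCompl_symm_apply_of_mem hm]
    have h1 : e1 ⟨src x, hm⟩ = ⟨Sum.elim A B x, ⟨x, rfl⟩⟩ := by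
      simp only [e1, Equiv.trans_apply]
      have : (⟨src x, hm⟩ : Set.range src) = Equiv.ofInjective src hsrc x :=
        Subtype.ext rfl
      rw [this, Equiv.symm_apply_apply]
      rfl
    rw [Equiv.sumCongr_apply, Sum.map_inl, h1, Equiv.Set.sumCompl_apply_inl]
  -- the vertex labelings
  let σ : Fin k → (Fin n ≃ Fin n) := fun i =>
    (zigE.trans (Equiv.addLeft (i.val : ZMod n))).trans (toFin.trans τ)
  have σ_apply : ∀ (i : Fin k) (x : Fin n),
      σ i x = τ (toFin ((i.val : ZMod n) + zigfun n x.val)) := fun _ _ => rfl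
  let G : Fin k → SimpleGraph (Fin n) := fun i => (pathGraph n).map (σ i).toEmbedding
  -- endpoints
  have hσ0 : ∀ i, σ i ⟨0, by omega⟩ = A i := by
    intro i
    rw [σ_apply, zig_zero, add_zero]
    have : toFin ((i.val : ℕ) : ZMod n) = src (Sum.inl i) := by
      apply Fin.ext
      rw [toFin_val, ZMod.val_natCast, Nat.mod_eq_of_lt (by omega)]
      rfl
    rw [this, hτ (Sum.inl i)]
    rfl
  have hσlast : ∀ i, σ i ⟨n - 1, by omega⟩ = B i := by
    intro i
    rw [σ_apply, zig_last hn, ← Nat.cast_add]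
    have : toFin ((i.val + c : ℕ) : ZMod n) = src (Sum.inr i) := by
      apply Fin.ext
      rw [toFin_val, ZMod.val_natCast, Nat.mod_eq_of_lt (by omega)]
      rfl
    rw [this, hτ (Sum.inr i)]
    rfl
  -- edge weight invariant
  have hkey : ∀ (i : Fin k) (u v : Fin n), (G i).Adj u v → ∃ ε : ℕ, ε ≤ 1 ∧
      (((τ.symm u).val : ZMod n) + ((τ.symm v).val : ZMod n)
        = ((2 * i.val + ε : ℕ) : ZMod n)) := by
    intro i u v huv
    rw [SimpleGraph.map_adj] at huv
    obtain ⟨a, b, hab, ha, hb⟩ := huv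
    have hu : (((τ.symm u).val : ZMod n)) = (i.val : ZMod n) + zigfun n a.val := by
      rw [← ha, Equiv.coe_toEmbedding, σ_apply, Equiv.symm_apply_apply, toFin_val,
        ZMod.natCast_val, ZMod.cast_id]
    have hv : (((τ.symm v).val : ZMod n)) = (i.val : ZMod n) + zigfun n b.val := by
      rw [← hb, Equiv.coe_toEmbedding, σ_apply, Equiv.symm_apply_apply, toFin_val,
        ZMod.natCast_val, ZMod.cast_id]
    rw [pathGraph_adj] at hab
    have hzig : ∃ ε : ℕ, ε ≤ 1 ∧ zigfun n a.val + zigfun n b.val = (ε : ℕ) := by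
      rcases hab with h | h
      · have := zig_sum n a.val
        rw [h] at this
        by_cases hp : a.val % 2 = 1
        · exact ⟨0, by omega, by rw [this, if_pos hp]; simp⟩
        · exact ⟨1, by omega, by rw [this, if_neg hp]; simp⟩
      · have := zig_sum n b.val
        rw [h] at this
        by_cases hp : b.val % 2 = 1
        · exact ⟨0, by omega, by rw [add_comm, this, if_pos hp]; simp⟩
        · exact ⟨1, by omega, by rw [add_comm, this, if_neg hp]; simp⟩
    obtain ⟨ε, hε, hsum⟩ := hzig
    refine ⟨ε, hε, ?_⟩
    rw [hu, hv]
    push_cast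
    rw [show (i.val : ZMod n) + zigfun n a.val + ((i.val : ZMod n) + zigfun n b.val)
        = (i.val : ZMod n) + (i.val : ZMod n) + (zigfun n a.val + zigfun n b.val) by ring,
      hsum]
    push_cast
    ring
  refine ⟨G, ?_, ?_, ?_⟩
  · intro i
    exact tree_map (SimpleGraph.Iso.map (σ i) (pathGraph n)) (pg_tree hn)
  · intro i j hij
    rw [Set.disjoint_left]
    intro e hei hej
    induction e using Sym2.ind with
    | _ u v =>
      rw [SimpleGraph.mem_edgeSet] at hei hej
      obtain ⟨ε, hε, h1⟩ := hkey i u v hei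
      obtain ⟨ε', hε', h2⟩ := hkey j u v hej
      rw [h1] at h2
      have := zmod_cast_inj (n := n) (by omega) (by omega) h2
      have hij' : i.val ≠ j.val := fun h => hij (Fin.ext h)
      omega
  · intro i v
    set x := (σ i).symm v with hx
    have hv : σ i x = v := Equiv.apply_symm_apply _ _
    have hncard : ((G i).neighborSet v).ncard = ((pathGraph n).neighborSet x).ncard := by
      rw [← hv, ← Nat.card_coe_set_eq, ← Nat.card_coe_set_eq]
      exact (Nat.card_congr ((SimpleGraph.Iso.map (σ i) (pathGraph n)).mapNeighborSet x)).symm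
    rw [hncard, pg_nbr hn x]
    have h0 : x.val = 0 ↔ v = A i := by
      rw [← hσ0 i, ← hv, Equiv.apply_eq_iff_eq, Fin.ext_iff]
    have h1 : x.val = n - 1 ↔ v = B i := by
      rw [← hσlast i, ← hv, Equiv.apply_eq_iff_eq, Fin.ext_iff]
    rw [if_congr (or_congr h0 h1) rfl rfl]


/-- `d` is a path degree sequence: exactly two degrees are `1` and all others are `2`. -/
def PathDegSeq {n : ℕ} (d : Fin n → ℕ) : Prop :=
  (Finset.univ.filter (fun v => d v = 1)).card = 2 ∧ ∀ v, d v = 1 ∨ d v = 2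

/-- The degree sequences `D 0, …, D (k-1)` have no common leaves. -/
def NoCommonLeaves {k n : ℕ} (D : Fin k → Fin n → ℕ) : Prop :=
  ∀ (v : Fin n) (i j : Fin k), i ≠ j → D i v = 1 → 2 ≤ D j v

/-- Path degree sequences without common leaves have edge-disjoint realizations: there are
pairwise edge-disjoint Hamiltonian paths (connected acyclic graphs with the prescribed
path degree sequences) realizing them. -/
theorem path_degree_sequences_edge_disjoint_realizations {k n : ℕ}
    (D : Fin k → Fin n → ℕ) (hD : ∀ i, PathDegSeq (D i)) (hleaves : NoCommonLeaves D) :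
    ∃ G : Fin k → SimpleGraph (Fin n),
      (∀ i, (G i).IsTree) ∧
      (∀ i j, i ≠ j → Disjoint (G i).edgeSet (G j).edgeSet) ∧
      (∀ i v, ((G i).neighborSet v).ncard = D i v) := by
  classical
  rcases Nat.eq_zero_or_pos k with hk | hk
  · subst hk
    exact ⟨fun i => i.elim0, fun i => i.elim0, fun i => i.elim0, fun i => i.elim0⟩
  -- n ≥ 2
  have hn : 2 ≤ n := by
    have h1 := (hD ⟨0, hk⟩).1
    have h2 := Finset.card_filter_le Finset.univ (fun v => D ⟨0, hk⟩ v = 1)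
    simp only [Finset.card_univ, Fintype.card_fin] at h2
    omega
  -- extract the leaves
  have hex : ∀ i, ∃ p : Fin n × Fin n, p.1 ≠ p.2 ∧
      Finset.univ.filter (fun v => D i v = 1) = {p.1, p.2} := by
    intro i
    obtain ⟨x, y, hxy, hs⟩ := Finset.card_eq_two.mp (hD i).1
    exact ⟨(x, y), hxy, hs⟩
  choose P hPne hPset using hex
  set A : Fin k → Fin n := fun i => (P i).1 with hA
  set B : Fin k → Fin n := fun i => (P i).2 with hB
  have hone : ∀ i v, D i v = 1 ↔ (v = A i ∨ v = B i) := by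
    intro i v
    have : v ∈ Finset.univ.filter (fun v => D i v = 1) ↔ v ∈ ({A i, B i} : Finset (Fin n)) := by
      rw [hPset i]
    simpa using this
  -- injectivity of the leaf assignment
  have hAB : Function.Injective (Sum.elim A B : Fin k ⊕ Fin k → Fin n) := by
    have key : ∀ (i j : Fin k) (u w : Fin n), D i u = 1 → D j w = 1 → u = w → i = j := by
      intro i j u w hu hw huw
      by_contra hij
      subst huw
      exact absurd (hleaves u i j hij hu) (by omega)
    rintro (i | i) (j | j) h <;> simp only [Sum.elim_inl, Sum.elim_inr] at h
    · exact congrArg _ (key i j _ _ ((hone i _).mpr (Or.inl rfl)) ((hone j _).mpr (Or.inl rfl)) h)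
    · exfalso
      have := key i j _ _ ((hone i _).mpr (Or.inl rfl)) ((hone j _).mpr (Or.inr rfl)) h
      subst this
      exact hPne i (h.trans rfl)
    · exfalso
      have := key i j _ _ ((hone i _).mpr (Or.inr rfl)) ((hone j _).mpr (Or.inl rfl)) h
      subst this
      exact hPne i (h.symm.trans rfl)
    · exact congrArg _ (key i j _ _ ((hone i _).mpr (Or.inr rfl)) ((hone j _).mpr (Or.inr rfl)) h)
  have h2k : k + k ≤ n := by
    have := Fintype.card_le_of_injective _ hAB
    simpa using this
  obtain ⟨G, hG1, hG2, hG3⟩ := main_aux hn h2k A B hAB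
  refine ⟨G, hG1, hG2, ?_⟩
  intro i v
  rw [hG3 i v]
  rcases (hD i).2 v with h | h
  · rw [h, if_pos ((hone i v).mp h)]
  · rw [h, if_neg (fun hc => by have := (hone i v).mpr hc; omega)]
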